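/- For integers k ≥ 2 and n ≥ 2k, every non-trivial intersecting family F of stable k-subsets of {1,...,n} satisfies |F| ≤ k² · C(n-k-2, k-2). -/

import Mathlib

open Finset

attribute [local instance] Classical.propDecidable

/-- `A` is a stable subset of `{1,...,n}`: no two cyclically consecutive elements. -/
def Stable (n : ℕ) (A : Finset ℕ) : Prop :=
  (∀ i ∈ A, i + 1 ∉ A) ∧ ¬(1 ∈ A ∧ n ∈ A)

/-- The collection of stable `k`-subsets of `{1,...,n}`. -/
noncomputable def stableSets (n k : ℕ) : Finset (Finset ℕ) :=
  ((Finset.Icc 1 n).powersetCard k).filter (fun A => Stable n A)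


lemma gap_lemma (d : ℤ) (S : Finset ℤ)
    (hgap : ∀ u ∈ S, ∀ v ∈ S, u < v → u + 2 ≤ v)
    (hd : ∀ s ∈ S, s ≤ d - 2 ∨ d + 2 ≤ s) :
    ∀ r : ℕ, ∀ u ∈ S, ∀ v ∈ S, u < v →
      (S.filter fun w => u ≤ w ∧ w < v).card = r →
      u + 2 * r + (if u < d ∧ d < v then 2 else 0) ≤ v := by
  intro r
  induction r using Nat.strong_induction_on with
  | _ r ih =>
    intro u hu v hv huv hcard
    have humem : u ∈ S.filter fun w => u ≤ w ∧ w < v := by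
      simp [mem_filter, hu, huv]
    rcases Nat.lt_or_ge r 2 with hr2 | hr2
    · -- r = 1 (r ≥ 1 since u in filter)
      have hr1 : r = 1 := by
        have : 1 ≤ r := by
          rw [← hcard]; exact card_pos.mpr ⟨u, humem⟩
        omega
      subst hr1
      have h2 := hgap u hu v hv huv
      split_ifs with hc
      · rcases hd u hu with h | h
        · rcases hd v hv with h' | h' <;> push_cast <;> omega
        · omega
      · push_cast; omega
    · -- r ≥ 2: pick w in filter, w ≠ u
      obtain ⟨w, hwmem, hwne⟩ := exists_mem_ne (by omega : 1 < (S.filter fun w => u ≤ w ∧ w < v).card) u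
      simp only [mem_filter] at hwmem
      obtain ⟨hwS, huw, hwv⟩ := hwmem
      have huw' : u < w := lt_of_le_of_ne huw (Ne.symm hwne)
      -- split the filter
      have hsplit : (S.filter fun z => u ≤ z ∧ z < v) =
          (S.filter fun z => u ≤ z ∧ z < w) ∪ (S.filter fun z => w ≤ z ∧ z < v) := by
        ext z; simp only [mem_union, mem_filter]
        constructor
        · rintro ⟨hz, h1, h2⟩
          rcases lt_or_ge z w with h | h
          · exact Or.inl ⟨hz, h1, h⟩
          · exact Or.inr ⟨hz, h, h2⟩
        · rintro (⟨hz, h1, h2⟩ | ⟨hz, h1, h2⟩) <;> exact ⟨hz, by omega, by omega⟩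
      have hdisj : Disjoint (S.filter fun z => u ≤ z ∧ z < w) (S.filter fun z => w ≤ z ∧ z < v) := by
        rw [disjoint_left]
        intro z h1 h2
        simp only [mem_filter] at h1 h2
        omega
      set r1 := (S.filter fun z => u ≤ z ∧ z < w).card with hr1def
      set r2 := (S.filter fun z => w ≤ z ∧ z < v).card with hr2def
      have hradd : r = r1 + r2 := by
        rw [← hcard, hsplit, card_union_of_disjoint hdisj]
      have hr1pos : 1 ≤ r1 := card_pos.mpr ⟨u, by simp [mem_filter, hu, huw']⟩
      have hr2pos : 1 ≤ r2 := card_pos.mpr ⟨w, by simp [mem_filter, hwS, hwv]⟩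
      have ih1 := ih r1 (by omega) u hu w hwS huw' rfl
      have ih2 := ih r2 (by omega) w hwS v hv hwv rfl
      have hwd := hd w hwS
      split_ifs at ih1 ih2 ⊢ <;> push_cast at * <;> omega


noncomputable def fm (a d : ℤ) (S : Finset ℤ) (s : ℤ) : ℤ :=
  s - a - 2 - ((S.filter (· < s)).card : ℤ) - (if d < s then 2 else 0)

noncomputable def gm (a d : ℤ) (T : Finset ℤ) (t : ℤ) : ℤ :=
  if t + a + 2 + ((T.filter (· < t)).card : ℤ) ≤ d - 2
  then t + a + 2 + ((T.filter (· < t)).card : ℤ)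
  else t + a + 2 + ((T.filter (· < t)).card : ℤ) + 2

lemma rank_split (S : Finset ℤ) (u v : ℤ) (huv : u < v) :
    (S.filter (· < v)).card = (S.filter (· < u)).card + (S.filter fun w => u ≤ w ∧ w < v).card := by
  rw [← card_union_of_disjoint]
  · congr 1
    ext z; simp only [mem_union, mem_filter]
    constructor
    · rintro ⟨hz, h⟩
      rcases lt_or_ge z u with h' | h'
      · exact Or.inl ⟨hz, h'⟩
      · exact Or.inr ⟨hz, h', h⟩
    · rintro (⟨hz, h⟩ | ⟨hz, h1, h2⟩) <;> exact ⟨hz, by omega⟩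
  · rw [disjoint_left]; intro z h1 h2
    simp only [mem_filter] at h1 h2; omega

lemma fm_strictMonoOn (a d : ℤ) (S : Finset ℤ)
    (hgap : ∀ u ∈ S, ∀ v ∈ S, u < v → u + 2 ≤ v)
    (hd : ∀ s ∈ S, s ≤ d - 2 ∨ d + 2 ≤ s) :
    StrictMonoOn (fm a d S) S := by
  intro u hu v hv huv
  have key := gap_lemma d S hgap hd _ u hu v hv huv rfl
  have hrk := rank_split S u v huv
  have hdu := hd u hu
  have hdv := hd v hv
  unfold fm
  rw [hrk]
  split_ifs at key ⊢ <;> push_cast at * <;> omega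

lemma gm_fm (a d : ℤ) (S : Finset ℤ)
    (hgap : ∀ u ∈ S, ∀ v ∈ S, u < v → u + 2 ≤ v)
    (hd : ∀ s ∈ S, s ≤ d - 2 ∨ d + 2 ≤ s)
    (s : ℤ) (hs : s ∈ S) :
    gm a d (S.image (fm a d S)) (fm a d S s) = s := by
  have hmono := fm_strictMonoOn a d S hgap hd
  have hrank : ((S.image (fm a d S)).filter (· < fm a d S s)).card
      = (S.filter (· < s)).card := by
    have himg : (S.image (fm a d S)).filter (· < fm a d S s)
        = (S.filter (· < s)).image (fm a d S) := by
      ext t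
      simp only [mem_filter, mem_image]
      constructor
      · rintro ⟨⟨u, hu, rfl⟩, hlt⟩
        refine ⟨u, ⟨hu, ?_⟩, rfl⟩
        by_contra h
        push_neg at h
        rcases eq_or_lt_of_le h with h' | h'
        · subst h'; exact absurd hlt (lt_irrefl _)
        · exact absurd (hmono hs hu h') (by omega)
      · rintro ⟨u, ⟨hu, hlt⟩, rfl⟩
        exact ⟨⟨u, hu, rfl⟩, hmono hu hs hlt⟩
    rw [himg]
    exact card_image_of_injOn (hmono.injOn.mono (filter_subset _ _))
  unfold gm
  rw [hrank]
  have hds := hd s hs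
  unfold fm
  split_ifs <;> push_cast at * <;> omega

lemma recon_eq (a d : ℤ) (S : Finset ℤ)
    (hgap : ∀ u ∈ S, ∀ v ∈ S, u < v → u + 2 ≤ v)
    (hd : ∀ s ∈ S, s ≤ d - 2 ∨ d + 2 ≤ s) :
    (S.image (fm a d S)).image (gm a d (S.image (fm a d S))) = S := by
  rw [image_image]
  have : ∀ s ∈ S, (gm a d (S.image (fm a d S)) ∘ fm a d S) s = id s := by
    intro s hs; exact gm_fm a d S hgap hd s hs
  rw [image_congr this, image_id]



lemma card_split3 (S : Finset ℤ) (s : ℤ) (hs : s ∈ S) :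
    S.card = (S.filter (· < s)).card + (S.filter (s < ·)).card + 1 := by
  have h1 : S = (S.filter (· < s)) ∪ insert s (S.filter (s < ·)) := by
    ext z
    simp only [mem_union, mem_insert, mem_filter]
    constructor
    · intro hz
      rcases lt_trichotomy z s with h | h | h
      · exact Or.inl ⟨hz, h⟩
      · exact Or.inr (Or.inl h)
      · exact Or.inr (Or.inr ⟨hz, h⟩)
    · rintro (⟨hz, _⟩ | rfl | ⟨hz, _⟩) <;> first | exact hz | exact hs
  have hd1 : Disjoint (S.filter (· < s)) (insert s (S.filter (s < ·))) := by
    rw [disjoint_left]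
    intro z h1 h2
    simp only [mem_filter] at h1
    simp only [mem_insert, mem_filter] at h2
    rcases h2 with rfl | ⟨_, h⟩ <;> omega
  have hns : s ∉ S.filter (s < ·) := by simp
  calc S.card = ((S.filter (· < s)) ∪ insert s (S.filter (s < ·))).card := by rw [← h1]
    _ = _ := by rw [card_union_of_disjoint hd1, card_insert_of_notMem hns]; ring

lemma fm_bounds (a d N : ℤ) (j : ℕ) (S : Finset ℤ)
    (hgap : ∀ u ∈ S, ∀ v ∈ S, u < v → u + 2 ≤ v)
    (hd : ∀ s ∈ S, s ≤ d - 2 ∨ d + 2 ≤ s)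
    (hP1 : ∀ s ∈ S, a + 2 ≤ s ∧ s ≤ a + N - 2)
    (hd1 : a + 2 ≤ d) (hd2 : d ≤ a + N - 2)
    (hcard : S.card = j) :
    ∀ s ∈ S, 0 ≤ fm a d S s ∧ fm a d S s ≤ N - j - 5 := by
  intro s hs
  set r1 := (S.filter (· < s)).card with hr1
  set r2 := (S.filter (s < ·)).card with hr2
  have hj : j = r1 + r2 + 1 := by rw [← hcard]; exact card_split3 S s hs
  have hds := hd s hs
  have hP1s := hP1 s hs
  constructor
  · -- lower bound
    rcases Nat.eq_zero_or_pos r1 with h0 | hpos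
    · unfold fm
      rw [← hr1, h0]
      split_ifs with h <;> push_cast <;> omega
    · have hne : (S.filter (· < s)).Nonempty := card_pos.mp (by omega)
      set u := (S.filter (· < s)).min' hne with hu
      have humem := min'_mem _ hne
      rw [← hu] at humem
      simp only [mem_filter] at humem
      obtain ⟨huS, hus⟩ := humem
      have hfeq : (S.filter fun w => u ≤ w ∧ w < s) = S.filter (· < s) := by
        ext w
        simp only [mem_filter]
        constructor
        · rintro ⟨h1, _, h3⟩; exact ⟨h1, h3⟩
        · rintro ⟨h1, h2⟩
          exact ⟨h1, min'_le _ _ (by simp only [mem_filter]; exact ⟨h1, h2⟩), h2⟩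
      have key := gap_lemma d S hgap hd r1 u huS s hs hus (by rw [hfeq])
      have hPu := hP1 u huS
      have hdu := hd u huS
      unfold fm
      rw [← hr1]
      split_ifs at key ⊢ <;> push_cast at * <;> omega
  · -- upper bound
    rcases Nat.eq_zero_or_pos r2 with h0 | hpos
    · unfold fm
      rw [← hr1]
      split_ifs with h <;> push_cast <;> omega
    · have hne : (S.filter (s < ·)).Nonempty := card_pos.mp (by omega)
      set v := (S.filter (s < ·)).max' hne with hv
      have hvmem := max'_mem _ hne
      rw [← hv] at hvmem
      simp only [mem_filter] at hvmem
      obtain ⟨hvS, hsv⟩ := hvmem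
      have hfeq : (S.filter fun w => s ≤ w ∧ w < v) = insert s ((S.filter (s < ·)).erase v) := by
        ext w
        simp only [mem_insert, mem_erase, mem_filter]
        constructor
        · rintro ⟨h1, h2, h3⟩
          rcases eq_or_lt_of_le h2 with rfl | h2'
          · exact Or.inl rfl
          · exact Or.inr ⟨by omega, h1, h2'⟩
        · rintro (rfl | ⟨h1, h2, h3⟩)
          · exact ⟨hs, le_refl _, hsv⟩
          · refine ⟨h2, by omega, ?_⟩
            have := le_max' _ w (mem_filter.mpr ⟨h2, h3⟩)
            rw [← hv] at this
            omega
      have hcard2 : (S.filter fun w => s ≤ w ∧ w < v).card = r2 := by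
        rw [hfeq, card_insert_of_notMem (by
          intro h
          simp only [mem_erase, mem_filter] at h
          omega), card_erase_of_mem]
        · omega
        · simp only [mem_filter]; exact ⟨hvS, hsv⟩
      have key := gap_lemma d S hgap hd r2 s hs v hvS hsv hcard2
      have hPv := hP1 v hvS
      have hdv := hd v hvS
      unfold fm
      rw [← hr1]
      split_ifs at key ⊢ <;> push_cast at * <;> omega






noncomputable def liftc (n x : ℕ) (s : ℕ) : ℤ := if s < x then (s : ℤ) + n else (s : ℤ)

noncomputable def Sof (n x y : ℕ) (B : Finset ℕ) : Finset ℤ :=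
  ((B.erase x).erase y).image (liftc n x)

lemma count_pairs (n k : ℕ) (hk : 2 ≤ k) (hn : 2 * k ≤ n) (x y : ℕ) (hxy : x < y) :
    ((stableSets n k).filter (fun B => x ∈ B ∧ y ∈ B)).card ≤ (n - k - 2).choose (k - 2) := by
  set G := (stableSets n k).filter (fun B => x ∈ B ∧ y ∈ B) with hG
  rcases G.eq_empty_or_nonempty with h | ⟨B₀, hB₀⟩
  · simp [h]
  -- basic facts about members of G
  have hmem : ∀ B ∈ G, B ⊆ Finset.Icc 1 n ∧ B.card = k ∧ Stable n B ∧ x ∈ B ∧ y ∈ B := by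
    intro B hB
    rw [hG, mem_filter] at hB
    obtain ⟨hB1, hBx, hBy⟩ := hB
    rw [stableSets, mem_filter, mem_powersetCard] at hB1
    exact ⟨hB1.1.1, hB1.1.2, hB1.2, hBx, hBy⟩
  obtain ⟨hB₀sub, hB₀card, hB₀st, hB₀x, hB₀y⟩ := hmem B₀ hB₀
  have hx1 : 1 ≤ x := by have := hB₀sub hB₀x; simp [Finset.mem_Icc] at this; omega
  have hyn : y ≤ n := by have := hB₀sub hB₀y; simp [Finset.mem_Icc] at this; omega
  have hxy2 : x + 2 ≤ y := by
    have h1 := hB₀st.1 x hB₀x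
    by_contra h
    have : y = x + 1 := by omega
    exact h1 (this ▸ hB₀y)
  have hnot1n : ¬(x = 1 ∧ y = n) := by
    rintro ⟨rfl, rfl⟩
    exact hB₀st.2 ⟨hB₀x, hB₀y⟩
  have hyub : (y : ℤ) ≤ (x : ℤ) + n - 2 := by
    rcases Nat.lt_or_ge x 2 with h | h
    · have hx : x = 1 := by omega
      have : y ≤ n - 1 := by
        rcases Nat.lt_or_ge y n with h' | h' 
        · omega
        · exact absurd ⟨hx, by omega⟩ hnot1n
      push_cast; omega
    · push_cast; omega
  set a : ℤ := (x : ℤ) with ha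
  set d : ℤ := (y : ℤ) with hdd
  -- properties of Sof
  have hprops : ∀ B ∈ G,
      (∀ u ∈ Sof n x y B, ∀ v ∈ Sof n x y B, u < v → u + 2 ≤ v) ∧
      (∀ s ∈ Sof n x y B, s ≤ d - 2 ∨ d + 2 ≤ s) ∧
      (∀ s ∈ Sof n x y B, a + 2 ≤ s ∧ s ≤ a + (n : ℤ) - 2) ∧
      (Sof n x y B).card = k - 2 := by
    intro B hB
    obtain ⟨hsub, hcard, hst, hxB, hyB⟩ := hmem B hB
    have helem : ∀ s ∈ (B.erase x).erase y, s ∈ B ∧ s ≠ x ∧ s ≠ y ∧ 1 ≤ s ∧ s ≤ n := by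
      intro s hs
      simp only [mem_erase] at hs
      obtain ⟨hsy, hsx, hsB⟩ := hs
      have := hsub hsB
      simp [Finset.mem_Icc] at this
      exact ⟨hsB, hsx, hsy, this.1, this.2⟩
    have hnon1n : ¬(1 ∈ B ∧ n ∈ B) := hst.2
    have hnocons : ∀ i ∈ B, i + 1 ∉ B := hst.1
    refine ⟨?_, ?_, ?_, ?_⟩
    · -- gap property
      rintro u hu v hv huv
      simp only [Sof, mem_image] at hu hv
      obtain ⟨s, hs, rfl⟩ := hu
      obtain ⟨s', hs', rfl⟩ := hv
      obtain ⟨hsB, hsx, hsy, hs1, hsn⟩ := helem s hs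
      obtain ⟨hs'B, hs'x, hs'y, hs'1, hs'n⟩ := helem s' hs'
      unfold liftc at huv ⊢
      split_ifs at huv ⊢ with h1 h2 h2
      · -- both lifted
        have hlt : s < s' := by omega
        have : s' ≠ s + 1 := fun h => hnocons s hsB (h ▸ hs'B)
        push_cast at *; omega
      · -- u lifted, v unlifted: u ≥ n+1 > n ≥ v, contradiction
        push_cast at *; omega
      · -- u unlifted, v lifted: v = s'+n, u = s
        have : ¬(s = n ∧ s' = 1) := by
          rintro ⟨rfl, rfl⟩
          exact hnon1n ⟨hs'B, hsB⟩
        push_cast at *; omega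
      · have hlt : s < s' := by push_cast at huv; omega
        have : s' ≠ s + 1 := fun h => hnocons s hsB (h ▸ hs'B)
        push_cast at *; omega
    · -- avoid d
      rintro t ht
      simp only [Sof, mem_image] at ht
      obtain ⟨s, hs, rfl⟩ := ht
      obtain ⟨hsB, hsx, hsy, hs1, hs'n⟩ := helem s hs
      have h1 : s ≠ y + 1 := fun h => hnocons y hyB (h ▸ hsB)
      have h2 : s + 1 ≠ y := fun h => hnocons s hsB (h ▸ hyB)
      unfold liftc
      split_ifs with h
      · -- s < x < y: lifted: s + n vs y: s+n ≥ n+1 ≥ y+1; = y+1 only if s=1, y=n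
        have : ¬(s = 1 ∧ y = n) := by
          rintro ⟨rfl, rfl⟩
          exact hnon1n ⟨hsB, hyB⟩
        right; push_cast; omega
      · rw [hdd]; push_cast; omega
    · -- P1 bounds
      rintro t ht
      simp only [Sof, mem_image] at ht
      obtain ⟨s, hs, rfl⟩ := ht
      obtain ⟨hsB, hsx, hsy, hs1, hsn⟩ := helem s hs
      have h1 : s ≠ x + 1 := fun h => hnocons x hxB (h ▸ hsB)
      have h2 : s + 1 ≠ x := fun h => hnocons s hsB (h ▸ hxB)
      unfold liftc
      split_ifs with h
      · rw [ha]; push_cast; omega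
      · have : ¬(x = 1 ∧ s = n) := by
          rintro ⟨rfl, rfl⟩
          exact hnon1n ⟨hxB, hsB⟩
        rw [ha]; push_cast; omega
    · -- card
      have hinj : Set.InjOn (liftc n x) ((B.erase x).erase y) := by
        intro s hs s' hs' heq
        obtain ⟨_, _, _, hs1, hsn⟩ := helem s hs
        obtain ⟨_, _, _, hs'1, hs'n⟩ := helem s' hs'
        unfold liftc at heq
        split_ifs at heq <;> push_cast at heq <;> omega
      rw [Sof, card_image_of_injOn hinj,
        card_erase_of_mem (mem_erase.mpr ⟨by omega, hyB⟩), card_erase_of_mem hxB, hcard]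
      omega
  -- the injection
  set Φ : Finset ℕ → Finset ℤ := fun B =>
    (Sof n x y B).image (fm a d (Sof n x y B)) with hΦ
  have hmaps : ∀ B ∈ G, Φ B ∈ (Finset.Icc (0:ℤ) ((n:ℤ) - k - 3)).powersetCard (k - 2) := by
    intro B hB
    obtain ⟨hgap, hdp, hP1, hcard⟩ := hprops B hB
    rw [mem_powersetCard]
    constructor
    · intro t ht
      rw [hΦ] at ht
      simp only [mem_image] at ht
      obtain ⟨s, hs, rfl⟩ := ht
      have := fm_bounds a d (n : ℤ) (k-2) _ hgap hdp hP1 (by rw [ha, hdd]; push_cast; omega) (by rw [ha, hdd]; push_cast; omega) hcard s hs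
      rw [Finset.mem_Icc]
      constructor
      · exact this.1
      · have hc : ((k:ℤ) - 2) = ((k - 2 : ℕ) : ℤ) := by push_cast; omega
        omega
    · rw [hΦ]
      rw [card_image_of_injOn ((fm_strictMonoOn a d _ hgap hdp).injOn)]
      exact hcard
  have hinj : Set.InjOn Φ G := by
    intro B₁ hB₁ B₂ hB₂ heq
    simp only [Finset.mem_coe] at hB₁ hB₂
    obtain ⟨hgap₁, hd₁, _, _⟩ := hprops B₁ hB₁
    obtain ⟨hgap₂, hd₂, _, _⟩ := hprops B₂ hB₂
    have hS : Sof n x y B₁ = Sof n x y B₂ := by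
      have h1 := recon_eq a d (Sof n x y B₁) hgap₁ hd₁
      have h2 := recon_eq a d (Sof n x y B₂) hgap₂ hd₂
      rw [← h1, ← h2]
      exact congrArg (fun T => T.image (gm a d T)) heq
    -- recover erase-erase from Sof
    have hrec : ∀ B ∈ G, (B.erase x).erase y = (Sof n x y B).image
        (fun t => if (n:ℤ) < t then (t - n).toNat else t.toNat) := by
      intro B hB
      obtain ⟨hsub, _, _, _, _⟩ := hmem B hB
      rw [Sof, image_image]
      symm
      apply Finset.image_congr (g := id) ?_ |>.trans (image_id)
      intro s hs
      simp only [Finset.mem_coe] at hs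
      have := hsub (mem_of_mem_erase (mem_of_mem_erase hs))
      simp [Finset.mem_Icc] at this
      simp only [Function.comp_apply, liftc, id]
      split_ifs <;> push_cast at * <;> omega
    have hee : (B₁.erase x).erase y = (B₂.erase x).erase y := by
      rw [hrec B₁ hB₁, hrec B₂ hB₂, hS]
    have hxB₁ := (hmem B₁ hB₁).2.2.2.1
    have hyB₁ := (hmem B₁ hB₁).2.2.2.2
    have hxB₂ := (hmem B₂ hB₂).2.2.2.1
    have hyB₂ := (hmem B₂ hB₂).2.2.2.2
    have hrecov : ∀ B : Finset ℕ, x ∈ B → y ∈ B → B = insert y (insert x ((B.erase x).erase y)) := by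
      intro B hxB hyB
      ext z
      simp only [mem_insert, mem_erase]
      by_cases h1 : z = y
      · subst h1; simp [hyB]
      by_cases h2 : z = x
      · subst h2; simp [hxB]
      simp [h1, h2]
    rw [hrecov B₁ hxB₁ hyB₁, hrecov B₂ hxB₂ hyB₂, hee]
  calc G.card ≤ ((Finset.Icc (0:ℤ) ((n:ℤ) - k - 3)).powersetCard (k - 2)).card :=
        Finset.card_le_card_of_injOn Φ hmaps hinj
    _ = (n - k - 2).choose (k - 2) := by
        rw [Finset.card_powersetCard, Int.card_Icc]
        congr 1
        omega


theorem stmt_5 (n k : ℕ) (hk : 2 ≤ k) (hn : 2 * k ≤ n) (F : Finset (Finset ℕ))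
    (hF : F ⊆ stableSets n k)
    (hint : ∀ A ∈ F, ∀ B ∈ F, (A ∩ B).Nonempty)
    (hnontriv : ¬ ∃ x, ∀ A ∈ F, x ∈ A) :
    F.card ≤ k ^ 2 * Nat.choose (n - k - 2) (k - 2) := by
  rcases F.eq_empty_or_nonempty with rfl | ⟨A, hA⟩
  · simp
  push_neg at hnontriv
  choose g hg1 hg2 using hnontriv
  have hcardmem : ∀ B ∈ F, B.card = k := by
    intro B hB
    have := hF hB
    rw [stableSets, mem_filter, mem_powersetCard] at this
    exact this.1.2
  -- each pair count is bounded
  have hpair : ∀ x y : ℕ, x ≠ y →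
      (F.filter (fun B => x ∈ B ∧ y ∈ B)).card ≤ (n - k - 2).choose (k - 2) := by
    intro x y hne
    have hsubf : F.filter (fun B => x ∈ B ∧ y ∈ B) ⊆
        (stableSets n k).filter (fun B => x ∈ B ∧ y ∈ B) := by
      intro B hB
      rw [mem_filter] at hB ⊢
      exact ⟨hF hB.1, hB.2⟩
    refine le_trans (Finset.card_le_card hsubf) ?_
    rcases lt_or_gt_of_ne hne with h | h
    · exact count_pairs n k hk hn x y h
    · have : (stableSets n k).filter (fun B => x ∈ B ∧ y ∈ B)
          = (stableSets n k).filter (fun B => y ∈ B ∧ x ∈ B) := by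
        apply filter_congr
        intro B _
        constructor <;> exact fun hh => ⟨hh.2, hh.1⟩
      rw [this]
      exact count_pairs n k hk hn y x h
  -- covering
  have hcover : F ⊆ A.biUnion (fun x => (g x).biUnion
      (fun y => F.filter (fun B => x ∈ B ∧ y ∈ B))) := by
    intro B hB
    obtain ⟨x, hx⟩ := hint A hA B hB
    rw [mem_inter] at hx
    obtain ⟨y, hy⟩ := hint (g x) (hg1 x) B hB
    rw [mem_inter] at hy
    rw [mem_biUnion]
    refine ⟨x, hx.1, ?_⟩
    rw [mem_biUnion]
    exact ⟨y, hy.1, mem_filter.mpr ⟨hB, hx.2, hy.2⟩⟩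
  calc F.card ≤ (A.biUnion (fun x => (g x).biUnion
        (fun y => F.filter (fun B => x ∈ B ∧ y ∈ B)))).card := Finset.card_le_card hcover
    _ ≤ ∑ x ∈ A, ((g x).biUnion (fun y => F.filter (fun B => x ∈ B ∧ y ∈ B))).card :=
        Finset.card_biUnion_le
    _ ≤ ∑ x ∈ A, ∑ y ∈ g x, (F.filter (fun B => x ∈ B ∧ y ∈ B)).card :=
        Finset.sum_le_sum (fun x _ => Finset.card_biUnion_le)
    _ ≤ ∑ x ∈ A, ∑ y ∈ g x, (n - k - 2).choose (k - 2) := by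
        refine Finset.sum_le_sum fun x hx => Finset.sum_le_sum fun y hy => ?_
        refine hpair x y ?_
        intro h
        exact hg2 x (h ▸ hy)
    _ = k ^ 2 * (n - k - 2).choose (k - 2) := by
        have : ∀ x ∈ A, ∑ _y ∈ g x, (n - k - 2).choose (k - 2)
            = k * (n - k - 2).choose (k - 2) := by
          intro x hx
          rw [Finset.sum_const, hcardmem (g x) (hg1 x), smul_eq_mul]
        rw [Finset.sum_congr rfl this, Finset.sum_const, hcardmem A hA, smul_eq_mul, ← mul_assoc,
          pow_two]
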